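/- arXiv:1407.2983 — 3 statements merged into one kernel-verified Lean document; each statement's English description precedes it below -/
import Mathlib

section
/- For real s with 0 < Re(s) < 1 and x > 0, the integral ∫₀^∞ t^(s-1) cos(xt) dt equals Γ(s) cos(πs/2) / x^s (as an improper/conditionally convergent integral). -/
open MeasureTheory Real Complex

/-- Lower incomplete gamma function `γ(s, x)`. -/
noncomputable def lowerGamma (s : ℂ) (x : ℝ) : ℂ :=
  ∫ t in (0 : ℝ)..x, (t : ℂ) ^ (s - 1) * Complex.exp (-t)

/-- Upper incomplete gamma function `Γ(s, x)`. -/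
noncomputable def upperGamma (s : ℂ) (x : ℝ) : ℂ :=
  ∫ t in Set.Ioi x, (t : ℂ) ^ (s - 1) * Complex.exp (-t)

/-- Modified Jacobi theta function `ψ(x) = ∑_{n≥1} e^(-π n² x)`. -/
noncomputable def jpsi (x : ℝ) : ℝ := ∑' n : ℕ+, Real.exp (-π * n ^ 2 * x)

/-- The Riemann xi function `ξ(s) = (1/2) s (s-1) π^(-s/2) Γ(s/2) ζ(s)`. -/
noncomputable def xi (s : ℂ) : ℂ :=
  s * (s - 1) / 2 * ((π : ℂ) ^ (-s / 2) * Complex.Gamma (s / 2) * riemannZeta s)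


section Proofs

open Set Filter

lemma aux_cont {s : ℂ} : ContinuousOn (fun t : ℝ => (t : ℂ) ^ s) (Ioi 0) :=
  fun t ht => (Complex.continuousAt_ofReal_cpow_const t s (Or.inr (ne_of_gt ht))).continuousWithinAt

lemma aux_meas {s z : ℂ} : AEStronglyMeasurable
    (fun t : ℝ => (t : ℂ) ^ s * Complex.exp (-(z * t))) (volume.restrict (Ioi 0)) := by
  refine ContinuousOn.aestronglyMeasurable ?_ measurableSet_Ioi
  exact aux_cont.mul (Complex.continuous_exp.comp (by continuity)).continuousOn

lemma aux_norm {s z : ℂ} {t : ℝ} (ht : 0 < t) :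
    ‖(t : ℂ) ^ s * Complex.exp (-(z * t))‖ = t ^ s.re * Real.exp (-(z.re * t)) := by
  rw [norm_mul,
    Complex.norm_cpow_eq_rpow_re_of_pos ht, Complex.norm_exp]
  congr 1
  simp

lemma int_rpow_exp {σ δ : ℝ} (hσ : -1 < σ) (hδ : 0 < δ) :
    IntegrableOn (fun t : ℝ => t ^ σ * Real.exp (-(δ * t))) (Ioi 0) := by
  have h0 : IntegrableOn (fun x : ℝ => Real.exp (-x) * x ^ σ) (Ioi 0) := by
    simpa using Real.GammaIntegral_convergent (by linarith : 0 < σ + 1)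
  rw [show (0:ℝ) = δ * 0 by ring] at h0
  have h1 : IntegrableOn (fun t : ℝ => Real.exp (-(δ * t)) * (δ * t) ^ σ) (Ioi 0) :=
    (integrableOn_Ioi_comp_mul_left_iff (fun x : ℝ => Real.exp (-x) * x ^ σ) 0 hδ).mpr h0
  have h2 : IntegrableOn
      (fun t : ℝ => ((δ : ℝ) ^ σ)⁻¹ * (Real.exp (-(δ * t)) * (δ * t) ^ σ)) (Ioi 0) :=
    h1.const_mul _
  refine h2.congr_fun (fun t ht => ?_) measurableSet_Ioi
  rw [mem_Ioi] at ht
  beta_reduce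
  rw [Real.mul_rpow hδ.le ht.le]
  field_simp [(Real.rpow_pos_of_pos hδ σ).ne']

lemma int_cpow_exp {s : ℂ} (hs : -1 < s.re) {z : ℂ} (hz : 0 < z.re) :
    IntegrableOn (fun t : ℝ => (t : ℂ) ^ s * Complex.exp (-(z * t))) (Ioi 0) := by
  refine Integrable.mono' (int_rpow_exp hs hz) aux_meas ?_
  filter_upwards [ae_restrict_mem measurableSet_Ioi] with t ht
  rw [aux_norm ht]

lemma gammaC_diff {s : ℂ} (hs : 0 < s.re) {z₀ : ℂ} (hz : 0 < z₀.re) :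
    HasDerivAt (fun z : ℂ => ∫ t in Ioi (0:ℝ), (t : ℂ) ^ (s-1) * Complex.exp (-(z * t)))
      (∫ t in Ioi (0:ℝ), -((t : ℂ) ^ s * Complex.exp (-(z₀ * t)))) z₀ := by
  have hε : 0 < z₀.re / 2 := by linarith
  refine (hasDerivAt_integral_of_dominated_loc_of_deriv_le (F := fun z (t : ℝ) =>
      (t : ℂ) ^ (s-1) * Complex.exp (-(z * t)))
      (F' := fun z (t : ℝ) => -((t : ℂ) ^ s * Complex.exp (-(z * t))))
      (bound := fun t : ℝ => t ^ s.re * Real.exp (-(z₀.re / 2 * t)))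
      (Metric.ball_mem_nhds z₀ hε) ?_ ?_ ?_ ?_ ?_ ?_).2
  · exact Eventually.of_forall fun z => aux_meas
  · have h : (s-1).re = s.re - 1 := by simp
    exact int_cpow_exp (by rw [h]; linarith : -1 < (s-1).re) hz
  · exact aux_meas.neg
  · filter_upwards [ae_restrict_mem measurableSet_Ioi] with t ht z hzball
    rw [norm_neg, aux_norm ht]
    have hre : z₀.re / 2 ≤ z.re := by
      have := Complex.abs_re_le_norm (z - z₀)
      have h2 : ‖z - z₀‖ < z₀.re / 2 := by
        simpa [Complex.dist_eq] using (Metric.mem_ball.mp hzball)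
      have : |z.re - z₀.re| < z₀.re / 2 := by
        calc |z.re - z₀.re| = |(z - z₀).re| := by simp
        _ ≤ ‖z - z₀‖ := Complex.abs_re_le_norm _
        _ < z₀.re / 2 := h2
      cases abs_lt.mp this; linarith
    gcongr
    · exact Real.rpow_nonneg (le_of_lt ht) _
    · exact ht.le
  · exact int_rpow_exp (by linarith : -1 < s.re) hε
  · filter_upwards [ae_restrict_mem measurableSet_Ioi] with t ht z hzball
    have h1 : HasDerivAt (fun z : ℂ => -(z * t)) (-(t:ℂ)) z := by
      simpa using (hasDerivAt_id z).mul_const (-(t:ℂ))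
    have h2 := (h1.cexp).const_mul ((t:ℂ) ^ (s-1))
    refine h2.congr_deriv ?_
    have ht0 : (t:ℂ) ≠ 0 := by exact_mod_cast (ne_of_gt (Set.mem_Ioi.mp ht))
    have : (t:ℂ) ^ (s-1) * (t:ℂ) = (t:ℂ) ^ s := by
      nth_rewrite 2 [show s = (s-1)+1 by ring]
      rw [Complex.cpow_add _ _ ht0, Complex.cpow_one]
    rw [← this]; ring

lemma gammaC {s : ℂ} (hs : 0 < s.re) {z : ℂ} (hz : 0 < z.re) :
    ∫ t in Ioi (0:ℝ), (t : ℂ) ^ (s-1) * Complex.exp (-(z * t)) = Complex.Gamma s * z ^ (-s) := by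
  set U : Set ℂ := {z | 0 < z.re} with hU
  have hUo : IsOpen U := isOpen_lt continuous_const Complex.continuous_re
  have hUc : IsPreconnected U := by
    refine Convex.isPreconnected ?_
    exact convex_halfSpace_gt (IsLinearMap.mk Complex.add_re Complex.smul_re) 0
  set G : ℂ → ℂ := fun z => ∫ t in Ioi (0:ℝ), (t : ℂ) ^ (s-1) * Complex.exp (-(z * t))
  set g : ℂ → ℂ := fun z => Complex.Gamma s * z ^ (-s)
  have hG : AnalyticOnNhd ℂ G U := by
    refine DifferentiableOn.analyticOnNhd (fun z hz => ?_) hUo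
    exact (gammaC_diff hs hz).differentiableAt.differentiableWithinAt
  have hg : AnalyticOnNhd ℂ g U := by
    refine DifferentiableOn.analyticOnNhd (fun z hz => ?_) hUo
    refine ((differentiableAt_id.cpow (differentiableAt_const (-s)) ?_).const_mul _).differentiableWithinAt
    exact Complex.mem_slitPlane_iff.mpr (Or.inl hz)
  have key : ∀ r : ℝ, 0 < r → G r = g r := by
    intro r hr
    have := Complex.integral_cpow_mul_exp_neg_mul_Ioi hs hr
    have harg : (r:ℂ).arg ≠ π := by
      rw [Complex.arg_ofReal_of_nonneg hr.le]; exact Real.pi_ne_zero.symm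
    have h1r : ((1:ℂ)/r) ^ s = (r:ℂ) ^ (-s) := by
      rw [one_div, Complex.inv_cpow _ _ harg, ← Complex.cpow_neg]
    show G (r:ℂ) = g (r:ℂ)
    simp only [G, g]
    rw [this, h1r]; ring
  have hfreq : ∃ᶠ z in nhdsWithin 1 {(1:ℂ)}ᶜ, G z = g z := by
    have hseq : Tendsto (fun n : ℕ => ((1 + (n+1:ℝ)⁻¹ : ℝ) : ℂ)) atTop (nhdsWithin 1 {(1:ℂ)}ᶜ) := by
      refine tendsto_nhdsWithin_of_tendsto_nhds_of_eventually_within _ ?_ ?_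
      · have hr : Tendsto (fun n : ℕ => (1 + (n+1:ℝ)⁻¹ : ℝ)) atTop (nhds 1) := by
          have := tendsto_one_div_add_atTop_nhds_zero_nat (𝕜 := ℝ)
          simp only [one_div] at this
          simpa using tendsto_const_nhds.add this
        have h5 := (Complex.continuous_ofReal.tendsto 1).comp hr
        have : (Complex.ofReal ∘ fun n : ℕ => (1 + (n+1:ℝ)⁻¹ : ℝ)) = fun n : ℕ => ((1 + (n+1:ℝ)⁻¹ : ℝ) : ℂ) := rfl
        rw [this] at h5
        simpa using h5
      · refine Eventually.of_forall fun n => ?_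
        simp only [mem_compl_iff, mem_singleton_iff]
        intro h
        have h2 : (1 + (n+1:ℝ)⁻¹ : ℝ) = 1 := by exact_mod_cast h
        have h3 : ((n:ℝ)+1)⁻¹ = 0 := by linarith
        have h4 : (0:ℝ) < ((n:ℝ)+1)⁻¹ := by positivity
        linarith
    refine hseq.frequently (Eventually.of_forall fun n => ?_).frequently
    exact key _ (by positivity)
  exact hG.eqOn_of_preconnected_of_frequently_eq hg hUc (show (1:ℂ) ∈ U by simp [hU]) hfreq hz

section Osc

variable {s : ℂ}

lemma intInt01 (hs0 : 0 < s.re) (z : ℂ) :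
    IntervalIntegrable (fun t : ℝ => (t : ℂ) ^ (s-1) * Complex.exp (-(z * t))) volume 0 1 := by
  have h1 : IntervalIntegrable (fun t : ℝ => (t : ℂ) ^ (s-1)) volume 0 1 :=
    intervalIntegral.intervalIntegrable_cpow' (by simp; linarith)
  exact h1.mul_continuousOn (Complex.continuous_exp.comp (by continuity)).continuousOn

lemma intIoi1 (hs1 : s.re < 1) {z : ℂ} (hz : 0 ≤ z.re) :
    IntegrableOn (fun t : ℝ => (t : ℂ) ^ (s-2) * Complex.exp (-(z * t))) (Set.Ioi 1) := by
  have hb : IntegrableOn (fun t : ℝ => t ^ (s.re - 2)) (Set.Ioi 1) :=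
    integrableOn_Ioi_rpow_of_lt (by linarith) one_pos
  refine Integrable.mono' hb ?_ ?_
  · exact (aux_meas (s := s-2) (z := z)).mono_set (Set.Ioi_subset_Ioi zero_le_one)
  · filter_upwards [ae_restrict_mem measurableSet_Ioi] with t ht
    have ht0 : (0:ℝ) < t := lt_trans one_pos ht
    rw [aux_norm ht0]
    have hle : Real.exp (-(z.re * t)) ≤ 1 := by
      rw [Real.exp_le_one_iff]
      have : 0 ≤ z.re * t := mul_nonneg hz ht0.le
      linarith
    have h2 : (s-2).re = s.re - 2 := by simp
    rw [h2]
    nth_rewrite 2 [← mul_one (t ^ (s.re - 2))]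
    exact mul_le_mul_of_nonneg_left hle (Real.rpow_nonneg ht0.le _)

lemma contIoi1 {w z : ℂ} {T : ℝ} (hT : 1 ≤ T) :
    ContinuousOn (fun t : ℝ => (t : ℂ) ^ w * Complex.exp (-(z * t))) (Set.uIcc 1 T) := by
  apply ContinuousOn.mul
  · intro t ht
    have ht0 : t ≠ 0 := by
      rcases Set.mem_uIcc.mp ht with h | h
      · exact ne_of_gt (by linarith [h.1])
      · exact ne_of_gt (by linarith [h.1, hT])
    exact (Complex.continuousAt_ofReal_cpow_const t w (Or.inr ht0)).continuousWithinAt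
  · exact (Complex.continuous_exp.comp (by continuity)).continuousOn

/-- Step 1: for `Re z ≥ 0`, `z ≠ 0`, the truncated integrals tend to `K z`. -/
lemma tendstoK (hs0 : 0 < s.re) (hs1 : s.re < 1) {z : ℂ} (hzre : 0 ≤ z.re) (hzne : z ≠ 0) :
    Filter.Tendsto (fun T : ℝ => ∫ t in (0:ℝ)..T, (t : ℂ) ^ (s-1) * Complex.exp (-(z * t)))
      Filter.atTop
      (nhds ((∫ t in (0:ℝ)..1, (t : ℂ) ^ (s-1) * Complex.exp (-(z * t)))
        + Complex.exp (-z) / z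
        + ((s-1)/z) * ∫ t in Set.Ioi (1:ℝ), (t : ℂ) ^ (s-2) * Complex.exp (-(z * t)))) := by
  have hs1' : s - 1 ≠ 0 := by
    intro h
    have : s = 1 := by linear_combination h
    rw [this] at hs1; simp at hs1
  -- IBP identity for T ≥ 1
  have ibp : ∀ T : ℝ, 1 ≤ T →
      (∫ t in (1:ℝ)..T, (t : ℂ) ^ (s-1) * Complex.exp (-(z * t)))
        = (T:ℂ) ^ (s-1) * Complex.exp (-(z * T)) / (-z) + Complex.exp (-z) / z
          + ((s-1)/z) * ∫ t in (1:ℝ)..T, (t : ℂ) ^ (s-2) * Complex.exp (-(z * t)) := by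
    intro T hT
    have hder_u : ∀ t ∈ Set.uIcc (1:ℝ) T, HasDerivAt (fun t : ℝ => (t : ℂ) ^ (s-1))
        ((s-1) * (t:ℂ) ^ (s-2)) t := by
      intro t ht
      have ht0 : 0 < t := by
        rcases Set.mem_uIcc.mp ht with h | h
        · linarith [h.1]
        · linarith [h.1, hT]
      have h := hasDerivAt_ofReal_cpow_const' (ne_of_gt ht0) (show s - 2 ≠ -1 by
        intro h; exact hs1' (by linear_combination h))
      have h2 := h.const_mul (s-1)
      have he : (fun y : ℝ => (s-1) * ((y:ℂ) ^ (s-2+1) / (s-2+1))) = fun y : ℝ => (y:ℂ) ^ (s-1) := by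
        funext y
        have h3 : s - 2 + 1 = s - 1 := by ring
        rw [h3]
        field_simp
      rw [he] at h2
      exact h2
    have hder_v : ∀ t ∈ Set.uIcc (1:ℝ) T, HasDerivAt (fun t : ℝ => Complex.exp (-(z * t)) / (-z))
        (Complex.exp (-(z * t))) t := by
      intro t _
      have hc : HasDerivAt (fun w : ℂ => Complex.exp (-(z * w))) (-z * Complex.exp (-(z * t))) (t:ℂ) := by
        have h1 : HasDerivAt (fun w : ℂ => -(z * w)) (-z) (t:ℂ) := by
          simpa using (hasDerivAt_id (t:ℂ)).const_mul (-z)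
        simpa [mul_comm] using h1.cexp
      have h3 := (hc.comp_ofReal).div_const (-z)
      have hval : (-z * Complex.exp (-(z * t))) / (-z) = Complex.exp (-(z * t)) := by
        field_simp
      rwa [hval] at h3
    have hu' : IntervalIntegrable (fun t : ℝ => (s-1) * (t:ℂ) ^ (s-2)) volume 1 T := by
      apply ContinuousOn.intervalIntegrable
      refine continuousOn_const.mul ?_
      intro t ht
      have ht0 : t ≠ 0 := by
        rcases Set.mem_uIcc.mp ht with h | h
        · exact ne_of_gt (by linarith [h.1])
        · exact ne_of_gt (by linarith [h.1, hT])
      exact (Complex.continuousAt_ofReal_cpow_const t (s-2) (Or.inr ht0)).continuousWithinAt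
    have hv' : IntervalIntegrable (fun t : ℝ => Complex.exp (-(z * t))) volume 1 T :=
      ((Complex.continuous_exp.comp (by continuity)).continuousOn).intervalIntegrable
    have key := intervalIntegral.integral_mul_deriv_eq_deriv_mul hder_u hder_v hu' hv'
    rw [key]
    simp_rw [mul_assoc]
    rw [intervalIntegral.integral_const_mul]
    have hsplit : ∀ t : ℝ, (t:ℂ) ^ (s-2) * (Complex.exp (-(z * t)) / (-z))
        = (-z)⁻¹ * ((t:ℂ) ^ (s-2) * Complex.exp (-(z * t))) := by
      intro t; field_simp
    simp_rw [hsplit]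
    rw [intervalIntegral.integral_const_mul]
    have h1 : ((1:ℝ):ℂ) ^ (s-1) = 1 := by norm_num
    have h1' : -(z * ((1:ℝ):ℂ)) = -z := by norm_num
    have hfact : ((-z)⁻¹ : ℂ) = -(z⁻¹) := by field_simp
    rw [h1, h1', hfact]
    rw [div_eq_mul_inv, div_eq_mul_inv, div_eq_mul_inv]
    ring
  -- eventual identity for the truncated integral
  have hsplit : ∀ᶠ T in Filter.atTop, (∫ t in (0:ℝ)..T, (t : ℂ) ^ (s-1) * Complex.exp (-(z * t)))
      = (∫ t in (0:ℝ)..1, (t : ℂ) ^ (s-1) * Complex.exp (-(z * t)))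
        + ((T:ℂ) ^ (s-1) * Complex.exp (-(z * T)) / (-z) + Complex.exp (-z) / z
          + ((s-1)/z) * ∫ t in (1:ℝ)..T, (t : ℂ) ^ (s-2) * Complex.exp (-(z * t))) := by
    filter_upwards [Filter.eventually_ge_atTop (1:ℝ)] with T hT
    rw [← ibp T hT]
    rw [← intervalIntegral.integral_add_adjacent_intervals (intInt01 hs0 z)
      ((contIoi1 hT).intervalIntegrable)]
  refine Filter.Tendsto.congr' (Filter.EventuallyEq.symm hsplit) ?_
  have lim1 : Filter.Tendsto (fun T : ℝ => (T:ℂ) ^ (s-1) * Complex.exp (-(z * T)) / (-z))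
      Filter.atTop (nhds 0) := by
    have hb : Filter.Tendsto (fun T : ℝ => T ^ (s.re - 1) * ‖z‖⁻¹) Filter.atTop (nhds 0) := by
      have := (tendsto_rpow_neg_atTop (by linarith : (0:ℝ) < 1 - s.re)).mul_const ‖z‖⁻¹
      simpa [neg_sub] using this
    refine squeeze_zero_norm' ?_ hb
    filter_upwards [Filter.eventually_gt_atTop (0:ℝ)] with T hT
    have h2 : (s-1).re = s.re - 1 := by simp
    have heq : ‖(T:ℂ) ^ (s-1) * Complex.exp (-(z * T)) / (-z)‖
        = T ^ (s.re - 1) * Real.exp (-(z.re * T)) * ‖z‖⁻¹ := by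
      rw [norm_div, aux_norm hT, norm_neg, div_eq_mul_inv, h2]
    rw [heq]
    have hexp : Real.exp (-(z.re * T)) ≤ 1 := by
      rw [Real.exp_le_one_iff]
      have : 0 ≤ z.re * T := mul_nonneg hzre hT.le
      linarith
    calc T ^ (s.re - 1) * Real.exp (-(z.re * T)) * ‖z‖⁻¹
        ≤ T ^ (s.re - 1) * 1 * ‖z‖⁻¹ := by
          gcongr
      _ = T ^ (s.re - 1) * ‖z‖⁻¹ := by ring
  have lim2 : Filter.Tendsto (fun T : ℝ => ((s-1)/z) * ∫ t in (1:ℝ)..T,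
      (t : ℂ) ^ (s-2) * Complex.exp (-(z * t))) Filter.atTop
      (nhds (((s-1)/z) * ∫ t in Set.Ioi (1:ℝ), (t : ℂ) ^ (s-2) * Complex.exp (-(z * t)))) :=
    (intervalIntegral_tendsto_integral_Ioi 1 (intIoi1 hs1 hzre) Filter.tendsto_id).const_mul _
  have htot := ((lim1.add (tendsto_const_nhds (x := Complex.exp (-z) / z))).add lim2).const_add
    (∫ t in (0:ℝ)..1, (t : ℂ) ^ (s-1) * Complex.exp (-(z * t)))
  convert htot using 2
  ring

end Osc

lemma oscLimit {s : ℂ} (hs0 : 0 < s.re) (hs1 : s.re < 1) {z : ℂ} (hzre : z.re = 0) (hzne : z ≠ 0) :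
    Filter.Tendsto (fun T : ℝ => ∫ t in (0:ℝ)..T, (t : ℂ) ^ (s-1) * Complex.exp (-(z * t)))
      Filter.atTop (nhds (Complex.Gamma s * z ^ (-s))) := by
  have hzre' : (0:ℝ) ≤ z.re := le_of_eq hzre.symm
  have hK := tendstoK hs0 hs1 hzre' hzne
  -- suffices to identify the limit
  suffices hid : ((∫ t in (0:ℝ)..1, (t : ℂ) ^ (s-1) * Complex.exp (-(z * t)))
        + Complex.exp (-z) / z
        + ((s-1)/z) * ∫ t in Set.Ioi (1:ℝ), (t : ℂ) ^ (s-2) * Complex.exp (-(z * t)))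
      = Complex.Gamma s * z ^ (-s) by
    rwa [hid] at hK
  set w : ℝ → ℂ := fun ε => (ε:ℂ) + z with hw_def
  have hwre : ∀ ε : ℝ, (w ε).re = ε := by intro ε; simp [hw_def, hzre]
  have hwne : ∀ ε : ℝ, 0 ≤ ε → w ε ≠ 0 := by
    intro ε hε h
    have : (w ε).im = 0 := by rw [h]; simp
    have him : z.im ≠ 0 := by
      intro h2
      exact hzne (Complex.ext hzre h2)
    simp [hw_def] at this
    exact him this
  set K : ℂ → ℂ := fun ζ => (∫ t in (0:ℝ)..1, (t : ℂ) ^ (s-1) * Complex.exp (-(ζ * t)))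
        + Complex.exp (-ζ) / ζ
        + ((s-1)/ζ) * ∫ t in Set.Ioi (1:ℝ), (t : ℂ) ^ (s-2) * Complex.exp (-(ζ * t)) with hK_def
  -- for ε > 0, K (w ε) = Γ(s) (w ε)^(-s)
  have hKe : ∀ ε : ℝ, 0 < ε → K (w ε) = Complex.Gamma s * (w ε) ^ (-s) := by
    intro ε hε
    have h1 := tendstoK hs0 hs1 (le_of_lt (by rw [hwre]; exact hε)) (hwne ε hε.le)
    have h2 : Filter.Tendsto (fun T : ℝ => ∫ t in (0:ℝ)..T, (t : ℂ) ^ (s-1)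
        * Complex.exp (-(w ε * t))) Filter.atTop
        (nhds (∫ t in Set.Ioi (0:ℝ), (t : ℂ) ^ (s-1) * Complex.exp (-(w ε * t)))) := by
      refine intervalIntegral_tendsto_integral_Ioi 0 ?_ Filter.tendsto_id
      exact int_cpow_exp (by simp; linarith) (by rw [hwre]; exact hε)
    have h3 := tendsto_nhds_unique h1 h2
    rw [hK_def]
    simp only
    rw [h3, gammaC hs0 (by rw [hwre]; exact hε)]
  -- limits as ε → 0⁺
  have hw0 : Filter.Tendsto w (nhdsWithin 0 (Set.Ioi 0)) (nhds z) := by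
    have : Filter.Tendsto w (nhds 0) (nhds z) := by
      have := (Complex.continuous_ofReal.tendsto 0).add (tendsto_const_nhds (x := z))
      simpa [hw_def] using this
    exact this.mono_left nhdsWithin_le_nhds
  have L1 : Filter.Tendsto (fun ε : ℝ => Complex.Gamma s * (w ε) ^ (-s))
      (nhdsWithin 0 (Set.Ioi 0)) (nhds (Complex.Gamma s * z ^ (-s))) := by
    have hslit : z ∈ Complex.slitPlane := by
      refine Complex.mem_slitPlane_iff.mpr (Or.inr ?_)
      intro h2
      exact hzne (Complex.ext hzre h2)
    exact (((continuousAt_cpow_const hslit).tendsto).comp hw0).const_mul _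
  have L2 : Filter.Tendsto (fun ε : ℝ => K (w ε)) (nhdsWithin 0 (Set.Ioi 0)) (nhds (K z)) := by
    have hA : Filter.Tendsto (fun ε : ℝ => ∫ t in (0:ℝ)..1, (t : ℂ) ^ (s-1)
        * Complex.exp (-(w ε * t))) (nhdsWithin 0 (Set.Ioi 0))
        (nhds (∫ t in (0:ℝ)..1, (t : ℂ) ^ (s-1) * Complex.exp (-(z * t)))) := by
      have heq : ∀ ζ : ℂ, (∫ t in (0:ℝ)..1, (t : ℂ) ^ (s-1) * Complex.exp (-(ζ * t)))
          = ∫ t in Set.Ioc (0:ℝ) 1, (t : ℂ) ^ (s-1) * Complex.exp (-(ζ * t)) := by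
        intro ζ; rw [intervalIntegral.integral_of_le zero_le_one]
      simp_rw [heq]
      refine MeasureTheory.tendsto_integral_filter_of_dominated_convergence
        (fun t : ℝ => t ^ (s.re - 1)) ?_ ?_ ?_ ?_
      · exact Filter.Eventually.of_forall fun ε =>
          (aux_meas (s := s-1) (z := w ε)).mono_set Set.Ioc_subset_Ioi_self
      · filter_upwards [self_mem_nhdsWithin] with ε (hε : ε ∈ Set.Ioi (0:ℝ))
        filter_upwards [ae_restrict_mem measurableSet_Ioc] with t ht
        rw [aux_norm ht.1]
        have h2 : (s-1).re = s.re - 1 := by simp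
        rw [h2, hwre]
        nth_rewrite 2 [← mul_one (t ^ (s.re - 1))]
        have hexp1 : Real.exp (-(ε * t)) ≤ 1 := by
          rw [Real.exp_le_one_iff]
          have : 0 ≤ ε * t := mul_nonneg (le_of_lt hε) ht.1.le
          linarith
        exact mul_le_mul_of_nonneg_left hexp1 (Real.rpow_nonneg ht.1.le _)
      · rw [← MeasureTheory.IntegrableOn]
        rw [← intervalIntegrable_iff_integrableOn_Ioc_of_le zero_le_one]
        exact intervalIntegral.intervalIntegrable_rpow' (by linarith)
      · filter_upwards [ae_restrict_mem measurableSet_Ioc] with t ht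
        have hcont : Filter.Tendsto (fun ε : ℝ => (t : ℂ) ^ (s-1) * Complex.exp (-(w ε * t)))
            (nhds 0) (nhds ((t : ℂ) ^ (s-1) * Complex.exp (-(z * t)))) := by
          have h1 : Filter.Tendsto (fun ε : ℝ => w ε) (nhds 0) (nhds z) := by
            have := (Complex.continuous_ofReal.tendsto 0).add (tendsto_const_nhds (x := z))
            simpa [hw_def] using this
          have h2 := ((h1.mul_const (t:ℂ)).neg).cexp
          exact h2.const_mul _
        exact hcont.mono_left nhdsWithin_le_nhds
    have hmid : Filter.Tendsto (fun ε : ℝ => Complex.exp (-(w ε)) / (w ε))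
        (nhdsWithin 0 (Set.Ioi 0)) (nhds (Complex.exp (-z) / z)) :=
      (hw0.neg.cexp).div hw0 hzne
    have hB : Filter.Tendsto (fun ε : ℝ => ((s-1)/(w ε)) * ∫ t in Set.Ioi (1:ℝ),
        (t : ℂ) ^ (s-2) * Complex.exp (-(w ε * t))) (nhdsWithin 0 (Set.Ioi 0))
        (nhds (((s-1)/z) * ∫ t in Set.Ioi (1:ℝ), (t : ℂ) ^ (s-2) * Complex.exp (-(z * t)))) := by
      have hfac : Filter.Tendsto (fun ε : ℝ => (s-1)/(w ε)) (nhdsWithin 0 (Set.Ioi 0))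
          (nhds ((s-1)/z)) := (tendsto_const_nhds (x := s-1)).div hw0 hzne
      refine hfac.mul ?_
      refine MeasureTheory.tendsto_integral_filter_of_dominated_convergence
        (fun t : ℝ => t ^ (s.re - 2)) ?_ ?_ ?_ ?_
      · exact Filter.Eventually.of_forall fun ε =>
          (aux_meas (s := s-2) (z := w ε)).mono_set (Set.Ioi_subset_Ioi zero_le_one)
      · filter_upwards [self_mem_nhdsWithin] with ε (hε : ε ∈ Set.Ioi (0:ℝ))
        filter_upwards [ae_restrict_mem measurableSet_Ioi] with t ht
        have ht0 : (0:ℝ) < t := lt_trans one_pos ht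
        rw [aux_norm ht0]
        have h2 : (s-2).re = s.re - 2 := by simp
        rw [h2, hwre]
        nth_rewrite 2 [← mul_one (t ^ (s.re - 2))]
        have hexp1 : Real.exp (-(ε * t)) ≤ 1 := by
          rw [Real.exp_le_one_iff]
          have : 0 ≤ ε * t := mul_nonneg (le_of_lt hε) ht0.le
          linarith
        exact mul_le_mul_of_nonneg_left hexp1 (Real.rpow_nonneg ht0.le _)
      · exact integrableOn_Ioi_rpow_of_lt (by linarith) one_pos
      · filter_upwards [ae_restrict_mem measurableSet_Ioi] with t ht
        have hcont : Filter.Tendsto (fun ε : ℝ => (t : ℂ) ^ (s-2) * Complex.exp (-(w ε * t)))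
            (nhds 0) (nhds ((t : ℂ) ^ (s-2) * Complex.exp (-(z * t)))) := by
          have h1 : Filter.Tendsto (fun ε : ℝ => w ε) (nhds 0) (nhds z) := by
            have := (Complex.continuous_ofReal.tendsto 0).add (tendsto_const_nhds (x := z))
            simpa [hw_def] using this
          exact (((h1.mul_const (t:ℂ)).neg).cexp).const_mul _
        exact hcont.mono_left nhdsWithin_le_nhds
    exact (hA.add hmid).add hB
  -- uniqueness of limits
  have heq : (fun ε : ℝ => K (w ε)) =ᶠ[nhdsWithin 0 (Set.Ioi 0)]
      (fun ε : ℝ => Complex.Gamma s * (w ε) ^ (-s)) := by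
    filter_upwards [self_mem_nhdsWithin] with ε (hε : ε ∈ Set.Ioi (0:ℝ))
    exact hKe ε hε
  exact tendsto_nhds_unique (L2.congr' heq) L1

theorem stmt0_aux (s : ℂ) (hs0 : 0 < s.re) (hs1 : s.re < 1) (x : ℝ) (hx : 0 < x) :
    Filter.Tendsto (fun T : ℝ => ∫ t in (0 : ℝ)..T, (t : ℂ) ^ (s - 1) * Real.cos (x * t))
      Filter.atTop
      (nhds (Complex.Gamma s * Complex.cos (π * s / 2) / (x : ℂ) ^ s)) := by
  obtain ⟨z₁, hz1⟩ : ∃ z : ℂ, z = -((x:ℂ) * Complex.I) := ⟨_, rfl⟩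
  obtain ⟨z₂, hz2⟩ : ∃ z : ℂ, z = (x:ℂ) * Complex.I := ⟨_, rfl⟩
  have hxne : (x:ℂ) ≠ 0 := Complex.ofReal_ne_zero.mpr (ne_of_gt hx)
  have hz1re : z₁.re = 0 := by simp [hz1]
  have hz2re : z₂.re = 0 := by simp [hz2]
  have hz2ne : z₂ ≠ 0 := by rw [hz2]; exact mul_ne_zero hxne Complex.I_ne_zero
  have hz1ne : z₁ ≠ 0 := by rw [hz1]; simpa using (mul_ne_zero hxne Complex.I_ne_zero)
  have osc1 := oscLimit hs0 hs1 hz1re hz1ne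
  have osc2 := oscLimit hs0 hs1 hz2re hz2ne
  -- pointwise splitting of cos
  have hptw : ∀ t : ℝ, (t : ℂ) ^ (s - 1) * (Real.cos (x * t) : ℂ)
      = ((t : ℂ) ^ (s-1) * Complex.exp (-(z₁ * t)) + (t : ℂ) ^ (s-1) * Complex.exp (-(z₂ * t))) / 2 := by
    intro t
    rw [Complex.ofReal_cos, Complex.cos]
    have e1 : ((x*t : ℝ) : ℂ) * Complex.I = -(z₁ * t) := by push_cast [hz1]; ring
    have e2 : -((x*t : ℝ) : ℂ) * Complex.I = -(z₂ * t) := by push_cast [hz2]; ring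
    rw [e1, e2]
    ring
  -- interval integrability of each piece
  have hII : ∀ (z : ℂ) (T : ℝ), IntervalIntegrable
      (fun t : ℝ => (t : ℂ) ^ (s-1) * Complex.exp (-(z * t))) volume 0 T := by
    intro z T
    have h1 : IntervalIntegrable (fun t : ℝ => (t : ℂ) ^ (s-1)) volume 0 T :=
      intervalIntegral.intervalIntegrable_cpow' (by simp; linarith)
    exact h1.mul_continuousOn (Complex.continuous_exp.comp (by continuity)).continuousOn
  have hsplit : ∀ T : ℝ, (∫ t in (0 : ℝ)..T, (t : ℂ) ^ (s - 1) * (Real.cos (x * t) : ℂ))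
      = ((∫ t in (0 : ℝ)..T, (t : ℂ) ^ (s-1) * Complex.exp (-(z₁ * t)))
        + ∫ t in (0 : ℝ)..T, (t : ℂ) ^ (s-1) * Complex.exp (-(z₂ * t))) / 2 := by
    intro T
    simp_rw [hptw]
    rw [intervalIntegral.integral_div]
    rw [intervalIntegral.integral_add (hII z₁ T) (hII z₂ T)]
  have hlim := ((osc1.add osc2).div_const (2:ℂ))
  have hfinal : (Complex.Gamma s * z₁ ^ (-s) + Complex.Gamma s * z₂ ^ (-s)) / 2
      = Complex.Gamma s * Complex.cos (π * s / 2) / (x : ℂ) ^ s := by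
    have hlog1 : Complex.log z₁ = (Real.log x : ℂ) - (π/2 : ℝ) * Complex.I := by
      rw [Complex.log]
      have habs : ‖z₁‖ = x := by
        simp [hz1, Complex.norm_real, abs_of_pos hx]
      have harg : Complex.arg z₁ = -(π/2) := by
        rw [Complex.arg_eq_neg_pi_div_two_iff]
        constructor
        · exact hz1re
        · simp only [hz1]; simp [hx]
      rw [habs, harg]
      push_cast
      ring
    have hlog2 : Complex.log z₂ = (Real.log x : ℂ) + (π/2 : ℝ) * Complex.I := by
      rw [Complex.log]
      have habs : ‖z₂‖ = x := by
        simp [hz2, Complex.norm_real, abs_of_pos hx]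
      have harg : Complex.arg z₂ = π/2 := by
        rw [Complex.arg_eq_pi_div_two_iff]
        constructor
        · exact hz2re
        · simp only [hz2]; simp [hx]
      rw [habs, harg]
    have hx_cpow : (x:ℂ) ^ s = Complex.exp ((Real.log x : ℂ) * s) := by
      rw [Complex.cpow_def_of_ne_zero hxne]
      congr 1
      rw [Complex.log]
      have : ‖(x:ℂ)‖ = x := by simp [Complex.norm_real, abs_of_pos hx]
      rw [this, Complex.arg_ofReal_of_nonneg hx.le]
      push_cast
      ring
    rw [Complex.cpow_def_of_ne_zero hz1ne, Complex.cpow_def_of_ne_zero hz2ne, hlog1, hlog2]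
    rw [Complex.cos]
    have e1 : ((Real.log x : ℂ) - (π/2 : ℝ) * Complex.I) * (-s)
        = -((Real.log x : ℂ) * s) + ((π:ℂ) * s / 2 * Complex.I) := by push_cast; ring
    have e2 : ((Real.log x : ℂ) + (π/2 : ℝ) * Complex.I) * (-s)
        = -((Real.log x : ℂ) * s) + (-((π:ℂ) * s / 2) * Complex.I) := by push_cast; ring
    rw [e1, e2, Complex.exp_add, Complex.exp_add, hx_cpow, Complex.exp_neg]
    field_simp
  rw [← hfinal]
  exact hlim.congr (fun T => (hsplit T).symm)

end Proofs

theorem stmt0 (s : ℂ) (hs0 : 0 < s.re) (hs1 : s.re < 1) (x : ℝ) (hx : 0 < x) :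
    Filter.Tendsto (fun T : ℝ => ∫ t in (0 : ℝ)..T, (t : ℂ) ^ (s - 1) * Real.cos (x * t))
      Filter.atTop
      (nhds (Complex.Gamma s * Complex.cos (π * s / 2) / (x : ℂ) ^ s)) :=
  stmt0_aux s hs0 hs1 x hx
end

section
/- The series E(s) := π^(-s/2) ∑_{n≥1} n^(-s) Γ(s/2, π n²) converges absolutely for every complex s, and defines an entire function of s. -/
open MeasureTheory Real Complex

lemma ug_eq_mellin (s : ℂ) {x : ℝ} (hx : 0 < x) :
    upperGamma s x = mellin (Set.indicator (Set.Ioi x) fun t : ℝ => Complex.exp (-t)) s := by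
  rw [mellin, upperGamma]
  rw [show (fun t : ℝ => (t : ℂ) ^ (s - 1) • Set.indicator (Set.Ioi x)
      (fun t : ℝ => Complex.exp (-t)) t)
    = Set.indicator (Set.Ioi x) (fun t : ℝ => (t : ℂ) ^ (s - 1) * Complex.exp (-t)) from ?_]
  · rw [setIntegral_indicator measurableSet_Ioi, Set.Ioi_inter_Ioi, max_eq_right hx.le]
  · ext t
    by_cases ht : t ∈ Set.Ioi x
    · simp [Set.indicator_of_mem ht, smul_eq_mul]
    · simp [Set.indicator_of_notMem ht]

lemma ug_diff {x : ℝ} (hx : 0 < x) : Differentiable ℂ fun s => upperGamma s x := by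
  intro s
  have h := funext fun s => ug_eq_mellin s hx
  rw [h]
  apply mellin_differentiableAt_of_isBigO_rpow_exp (a := 1/2) (b := s.re - 1) (by norm_num)
  · -- locally integrable
    have hi : IntegrableOn (fun t : ℝ => Complex.exp (-(t : ℂ))) (Set.Ioi x) := by
      have : IntegrableOn (fun t : ℝ => Real.exp (-1 * t)) (Set.Ioi x) :=
        exp_neg_integrableOn_Ioi x one_pos
      have h2 := this.ofReal (𝕜 := ℂ)
      have he : (fun t : ℝ => Complex.exp (-(t : ℂ))) = fun t : ℝ => ((Real.exp (-1 * t) : ℝ) : ℂ) := by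
        ext t
        rw [Complex.ofReal_exp]
        norm_num
      rw [he]
      exact h2
    exact (hi.integrable_indicator measurableSet_Ioi).locallyIntegrable.locallyIntegrableOn _
  · -- top bound
    apply Asymptotics.IsBigO.of_bound 1
    filter_upwards [Filter.eventually_ge_atTop (0:ℝ)] with t ht
    rw [one_mul]
    by_cases h' : t ∈ Set.Ioi x
    · rw [Set.indicator_of_mem h']
      rw [Complex.norm_exp]
      simp only [Real.norm_eq_abs, Real.abs_exp]
      rw [show (-(t:ℂ)).re = -t by simp]
      exact Real.exp_le_exp.2 (by nlinarith)
    · rw [Set.indicator_of_notMem h']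
      simp [Real.abs_exp, (Real.exp_pos _).le]
  · -- bot bound
    apply Asymptotics.IsBigO.of_bound 0
    filter_upwards [Ioo_mem_nhdsGT_of_mem (Set.left_mem_Ico.2 hx)] with t ht
    rw [Set.indicator_of_notMem (by simp only [Set.mem_Ioi]; linarith [ht.2] : t ∉ Set.Ioi x)]
    simp
  · linarith


open MeasureTheory Real Complex

lemma int_exp_half (a : ℝ) :
    ∫ t in Set.Ioi a, Real.exp (-(1/2) * t) = 2 * Real.exp (-(1/2) * a) := by
  have h := integral_comp_mul_left_Ioi (fun u => Real.exp (-u)) a (b := 1/2) (by norm_num)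
  simp only [smul_eq_mul] at h
  rw [show (fun t : ℝ => Real.exp (-(1/2) * t)) = fun t : ℝ => Real.exp (-(1/2 * t)) from
    funext fun t => by ring_nf] at *
  rw [h, integral_exp_neg_Ioi]
  norm_num

lemma ug_bound {M : ℝ} (hM : 0 ≤ M) {s : ℂ} (hs : s.re ≤ M) {x : ℝ} (hx : 1 ≤ x) :
    ‖upperGamma s x‖ ≤ 2 * Real.exp (M * Real.log (2 * (M + 1))) * Real.exp (-(1/2) * x) := by
  set K := Real.exp (M * Real.log (2 * (M + 1))) with hK
  have key : ∀ t : ℝ, 1 ≤ t → t ^ (s.re - 1) * Real.exp (-t) ≤ K * Real.exp (-(1/2) * t) := by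
    intro t ht
    have ht0 : 0 < t := by linarith
    have h1 : t ^ (s.re - 1) ≤ t ^ M := Real.rpow_le_rpow_of_exponent_le ht (by linarith)
    have h2 : t ^ M = Real.exp (M * Real.log t) := by
      rw [Real.rpow_def_of_pos ht0, mul_comm]
    have hc : (0:ℝ) < 2 * (M + 1) := by linarith
    have h3 : Real.log t ≤ t / (2 * (M + 1)) + Real.log (2 * (M + 1)) := by
      have := Real.log_le_sub_one_of_pos (x := t / (2 * (M + 1))) (by positivity)
      rw [Real.log_div ht0.ne' hc.ne'] at this
      linarith
    have h4 : M * Real.log t ≤ (1/2) * t + M * Real.log (2 * (M + 1)) := by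
      have h5 : M * (t / (2 * (M + 1))) ≤ (1/2) * t := by
        rw [mul_div_assoc']
        rw [div_le_iff₀ hc]
        nlinarith
      nlinarith [mul_le_mul_of_nonneg_left h3 hM]
    calc t ^ (s.re - 1) * Real.exp (-t) ≤ Real.exp (M * Real.log t) * Real.exp (-t) := by
          rw [← h2]; exact mul_le_mul_of_nonneg_right h1 (Real.exp_pos _).le
      _ ≤ K * Real.exp (-(1/2) * t) := by
          rw [← Real.exp_add, hK, ← Real.exp_add]
          exact Real.exp_le_exp.2 (by linarith)
  have hInt : IntegrableOn (fun t : ℝ => K * Real.exp (-(1/2) * t)) (Set.Ioi x) :=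
    (exp_neg_integrableOn_Ioi x (by norm_num : (0:ℝ) < 1/2)).const_mul K
  have hb : ‖upperGamma s x‖ ≤ ∫ t in Set.Ioi x, K * Real.exp (-(1/2) * t) := by
    apply norm_integral_le_of_norm_le hInt
    filter_upwards [ae_restrict_mem measurableSet_Ioi] with t ht
    have ht1 : 1 ≤ t := le_trans hx (le_of_lt ht)
    have ht0 : 0 < t := by linarith
    rw [norm_mul,
      Complex.norm_cpow_eq_rpow_re_of_pos ht0, Complex.norm_exp]
    rw [show (s - 1).re = s.re - 1 by simp, show (-(t:ℂ)).re = -t by simp]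
    exact key t ht1
  calc ‖upperGamma s x‖ ≤ ∫ t in Set.Ioi x, K * Real.exp (-(1/2) * t) := hb
    _ = K * (2 * Real.exp (-(1/2) * x)) := by rw [integral_const_mul, int_exp_half]
    _ = 2 * K * Real.exp (-(1/2) * x) := by ring

lemma sum_aux (M : ℝ) : Summable fun n : ℕ => Real.exp (M * n - π * n ^ 2 / 2) := by
  apply Summable.of_norm_bounded_eventually_nat (g := fun n => Real.exp (-1 * n))
  · simpa using Real.summable_exp_nat_mul_iff.2 (by norm_num : (-1:ℝ) < 0)
  · filter_upwards [Filter.eventually_ge_atTop (⌈M + 1⌉₊)] with n hn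
    have h1 : M + 1 ≤ (n : ℝ) := le_trans (Nat.le_ceil _) (by exact_mod_cast hn)
    rw [Real.norm_eq_abs, Real.abs_exp]
    apply Real.exp_le_exp.2
    have hpi : (2:ℝ) ≤ π := by linarith [Real.pi_gt_three]
    have hn0 : (0:ℝ) ≤ n := Nat.cast_nonneg n
    nlinarith [sq_nonneg ((n:ℝ))]


lemma term_bound {M : ℝ} (hM : 0 ≤ M) {s : ℂ} (hs : |s.re| ≤ M) (n : ℕ+) :
    ‖(n : ℂ) ^ (-s) * upperGamma (s / 2) (π * (n : ℕ) ^ 2)‖ ≤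
      2 * Real.exp (M * Real.log (2 * (M + 1))) * Real.exp (M * (n : ℕ) - π * (n : ℕ) ^ 2 / 2) := by
  have hn1 : (1:ℝ) ≤ ((n : ℕ) : ℝ) := by exact_mod_cast n.one_le
  have hx : (1:ℝ) ≤ π * ((n : ℕ) : ℝ) ^ 2 := by nlinarith [Real.pi_gt_three]
  have habs := abs_le.1 hs
  have h1 : ‖(n : ℂ) ^ (-s)‖ ≤ Real.exp (M * (n : ℕ)) := by
    rw [show ((n : ℕ+) : ℂ) = (((n : ℕ) : ℝ) : ℂ) by push_cast; rfl,
      Complex.norm_cpow_eq_rpow_re_of_pos (by positivity),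
      Real.rpow_def_of_pos (by positivity)]
    apply Real.exp_le_exp.2
    have hlog : 0 ≤ Real.log ((n : ℕ) : ℝ) := Real.log_nonneg hn1
    have hlog2 : Real.log ((n : ℕ) : ℝ) ≤ ((n : ℕ) : ℝ) :=
      (Real.log_le_sub_one_of_pos (by positivity)).trans (by linarith)
    have hre : (-s).re ≤ M := by
      rw [Complex.neg_re]; linarith [habs.1]
    calc Real.log ((n : ℕ) : ℝ) * (-s).re ≤ Real.log ((n : ℕ) : ℝ) * M :=
          mul_le_mul_of_nonneg_left hre hlog
      _ ≤ ((n : ℕ) : ℝ) * M := mul_le_mul_of_nonneg_right hlog2 hM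
      _ = M * ((n : ℕ) : ℝ) := mul_comm _ _
  have hs2 : (s / 2).re ≤ M := by
    have : (s / 2).re = s.re / 2 := by
      rw [show (2 : ℂ) = ((2 : ℝ) : ℂ) by norm_num, Complex.div_ofReal_re]
    rw [this]
    rcases le_or_gt s.re 0 with h | h
    · linarith
    · linarith [habs.2]
  have h2 := ug_bound hM hs2 hx
  set K := Real.exp (M * Real.log (2 * (M + 1))) with hK
  calc ‖(n : ℂ) ^ (-s) * upperGamma (s / 2) (π * (n : ℕ) ^ 2)‖
      = ‖(n : ℂ) ^ (-s)‖ * ‖upperGamma (s / 2) (π * (n : ℕ) ^ 2)‖ := norm_mul _ _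
    _ ≤ Real.exp (M * (n : ℕ)) * (2 * K * Real.exp (-(1/2) * (π * (n : ℕ) ^ 2))) := by
        apply mul_le_mul h1 h2 (norm_nonneg _) (Real.exp_pos _).le
    _ = 2 * K * Real.exp (M * (n : ℕ) - π * (n : ℕ) ^ 2 / 2) := by
        rw [mul_comm (Real.exp _), mul_assoc, ← Real.exp_add]
        ring_nf

lemma sum_aux' (M C : ℝ) :
    Summable fun n : ℕ+ => C * Real.exp (M * (n : ℕ) - π * (n : ℕ) ^ 2 / 2) :=
  (((sum_aux M).mul_left C).comp_injective (fun a b h => PNat.coe_injective h))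

theorem stmt5 :
    (∀ s : ℂ, Summable fun n : ℕ+ => ‖(n : ℂ) ^ (-s) * upperGamma (s / 2) (π * n ^ 2)‖)
      ∧ Differentiable ℂ
          (fun s : ℂ =>
            (π : ℂ) ^ (-s / 2) * ∑' n : ℕ+, (n : ℂ) ^ (-s) * upperGamma (s / 2) (π * n ^ 2)) := by
  have hcast : ∀ n : ℕ+, ((n : ℕ+) : ℝ) = (((n : ℕ)) : ℝ) := fun n => rfl
  have hdiff : ∀ n : ℕ+,
      Differentiable ℂ fun s : ℂ => (n : ℂ) ^ (-s) * upperGamma (s / 2) (π * (n : ℝ) ^ 2) := by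
    intro n
    have hn1 : (1:ℝ) ≤ ((n : ℕ) : ℝ) := by exact_mod_cast n.one_le
    have hx : (0:ℝ) < π * (n : ℝ) ^ 2 := by
      rw [hcast]; nlinarith [Real.pi_gt_three]
    have h1 : Differentiable ℂ fun s : ℂ => (n : ℂ) ^ (-s) :=
      differentiable_id.neg.const_cpow (Or.inl (by exact_mod_cast n.ne_zero))
    have h2 : Differentiable ℂ fun s : ℂ => upperGamma (s / 2) (π * (n : ℝ) ^ 2) :=
      (ug_diff hx).comp (differentiable_id.div_const 2)
    exact h1.mul h2
  constructor
  · intro s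
    apply Summable.of_nonneg_of_le (fun n => norm_nonneg _)
      (fun n => ?_) (sum_aux' |s.re| (2 * Real.exp (|s.re| * Real.log (2 * (|s.re| + 1)))))
    have := term_bound (abs_nonneg s.re) (le_refl |s.re|) n
    simpa [hcast] using this
  · have key : Differentiable ℂ
        (fun s : ℂ => ∑' n : ℕ+, (n : ℂ) ^ (-s) * upperGamma (s / 2) (π * n ^ 2)) := by
      intro s₀
      set M := |s₀.re| + 1 with hM
      have hM0 : (0:ℝ) ≤ M := by positivity
      set U : Set ℂ := Complex.re ⁻¹' Set.Ioo (-M) M with hU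
      have hUo : IsOpen U := isOpen_Ioo.preimage Complex.continuous_re
      have hs₀ : s₀ ∈ U := by
        constructor
        · simp only [hM]; linarith [neg_abs_le s₀.re]
        · simp only [hM]; linarith [le_abs_self s₀.re]
      have hd := differentiableOn_tsum_of_summable_norm
        (sum_aux' M (2 * Real.exp (M * Real.log (2 * (M + 1)))))
        (fun n => (hdiff n).differentiableOn) hUo
        (fun n w hw => ?_)
      · exact (hd.differentiableAt (hUo.mem_nhds hs₀))
      · have hw' : |w.re| ≤ M := by
          rcases hw with ⟨h1, h2⟩
          rw [abs_le]; constructor <;> linarith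
        have := term_bound hM0 hw' n
        simpa [hcast] using this
    have hpi : ((π : ℝ) : ℂ) ≠ 0 := Complex.ofReal_ne_zero.2 Real.pi_ne_zero
    exact ((differentiable_id.neg.div_const 2).const_cpow (Or.inl hpi)).mul key
end

section
/- For complex s with Re(s) > 1 and real a > 0, ∫₀^∞ e^(-sx) ∑_{n≥1} e^(-a n² e^(-2x)) dx = (a^(-s/2)/2) ∑_{n≥1} n^(-s) γ(s/2, a n²), where γ is the lower incomplete gamma function. -/
open MeasureTheory Real Complex Set Filter Topology
set_option maxHeartbeats 1000000
set_option linter.unusedTactic false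

lemma ofReal_cpow_pos {r : ℝ} (hr : 0 < r) (w : ℂ) :
    (r : ℂ) ^ w = Complex.exp (w * Real.log r) := by
  rw [Complex.cpow_def_of_ne_zero (by exact_mod_cast hr.ne'), Complex.ofReal_log hr.le, mul_comm]

lemma key_int (s : ℂ) (hs : 0 < s.re) {c : ℝ} (hc : 0 < c) :
    IntegrableOn (fun x : ℝ => Complex.exp (-s * x) * (Real.exp (-(c * Real.exp (-2 * x))) : ℂ))
      (Set.Ioi 0) := by
  have hcont : Continuous fun x : ℝ =>
      Complex.exp (-s * x) * (Real.exp (-(c * Real.exp (-2 * x))) : ℂ) := by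
    fun_prop
  refine (exp_neg_integrableOn_Ioi 0 hs).mono' hcont.aestronglyMeasurable ?_
  filter_upwards with x
  rw [norm_mul, Complex.norm_exp, Complex.norm_real, Real.norm_eq_abs]
  have h1 : (-s * ↑x).re = -s.re * x := by simp
  rw [h1, abs_of_pos (Real.exp_pos _)]
  calc Real.exp (-s.re * x) * Real.exp (-(c * Real.exp (-2 * x)))
      ≤ Real.exp (-s.re * x) * 1 := by
        gcongr
        exact Real.exp_le_one_iff.2 (neg_nonpos.2 (by positivity))
    _ = Real.exp (-s.re * x) := mul_one _

lemma step_A (s : ℂ) {c : ℝ} (hc : 0 < c) {X : ℝ} (hX : 0 ≤ X) :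
    ∫ x in (0:ℝ)..X, Complex.exp (-s * x) * (Real.exp (-(c * Real.exp (-2 * x))) : ℂ)
      = ∫ u in Set.Ioc (c * Real.exp (-2 * X)) c,
          (c:ℂ) ^ (-s/2) / 2 * ((u:ℂ) ^ (s/2 - 1) * Complex.exp (-u)) := by
  set f : ℝ → ℝ := fun x => c * Real.exp (-2 * x) with hf
  set f' : ℝ → ℝ := fun x => -2 * (c * Real.exp (-2 * x)) with hf'
  set g : ℝ → ℂ := fun u => -((c:ℂ) ^ (-s/2) / 2 * ((u:ℂ) ^ (s/2 - 1) * Complex.exp (-u))) with hg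
  have hderiv : ∀ x ∈ Set.uIcc (0:ℝ) X, HasDerivAt f (f' x) x := by
    intro x _
    have h1 : HasDerivAt (fun x : ℝ => -2 * x) (-2) x := by
      simpa using (hasDerivAt_id x).const_mul (-2)
    have h2 := (Real.hasDerivAt_exp (-2 * x)).comp x h1
    have := h2.const_mul c
    convert this using 1
    · rfl
    · rfl
    · rfl
    simp [hf']; ring
  have hf'cont : ContinuousOn f' (Set.uIcc 0 X) := by fun_prop
  have himg : f '' Set.uIcc 0 X ⊆ Set.Ioi 0 := by
    rintro _ ⟨x, -, rfl⟩
    exact mul_pos hc (Real.exp_pos _)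
  have hgcont : ContinuousOn g (f '' Set.uIcc 0 X) := by
    refine ContinuousOn.mono ?_ himg
    refine ContinuousOn.neg (ContinuousOn.mul continuousOn_const (ContinuousOn.mul ?_ (by fun_prop)))
    intro u hu
    refine (ContinuousAt.continuousWithinAt ?_)
    have h1 : ContinuousAt (fun z : ℂ => z ^ (s/2 - 1)) ((u:ℝ):ℂ) :=
      continuousAt_cpow_const (Complex.ofReal_mem_slitPlane.2 hu)
    exact h1.comp Complex.continuous_ofReal.continuousAt
  have key : ∀ x : ℝ, f' x • g (f x)
      = Complex.exp (-s * x) * (Real.exp (-(c * Real.exp (-2 * x))) : ℂ) := by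
    intro x
    have hfx : (0:ℝ) < f x := mul_pos hc (Real.exp_pos _)
    have hfxne : (f x : ℂ) ≠ 0 := by exact_mod_cast hfx.ne'
    have e1 : ((f x : ℂ)) ^ (s/2 - 1) * (f x : ℂ) = (f x : ℂ) ^ (s/2) := by
      rw [Complex.cpow_sub _ _ hfxne, Complex.cpow_one, div_mul_cancel₀]
      exact hfxne
    have e2 : (c:ℂ) ^ (-s/2) * (f x : ℂ) ^ (s/2) = Complex.exp (-s * x) := by
      rw [ofReal_cpow_pos hc, ofReal_cpow_pos hfx, ← Complex.exp_add]
      congr 1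
      have hlog : Real.log (f x) = Real.log c + (-2 * x) := by
        rw [hf]; rw [Real.log_mul hc.ne' (Real.exp_ne_zero _), Real.log_exp]
      rw [hlog]
      push_cast
      ring
    have hstep : f' x • g (f x)
        = (c:ℂ) ^ (-s/2) * ((f x : ℂ) ^ (s/2 - 1) * (f x : ℂ)) * Complex.exp (-(f x : ℂ)) := by
      simp only [hg, real_smul]
      have hf'x : ((f' x : ℝ) : ℂ) = -2 * ((f x : ℝ) : ℂ) := by
        have : f' x = -2 * f x := rfl
        rw [this]; push_cast; ring
      rw [hf'x]; ring
    have e3 : ((Real.exp (-(c * Real.exp (-2 * x))) : ℝ) : ℂ) = Complex.exp (-(f x : ℂ)) := by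
      rw [Complex.ofReal_exp]
      congr 1
      rw [hf]
      push_cast
      ring
    rw [hstep, e1, e2, e3]
  have hfX : f X ≤ f 0 := by
    have : Real.exp (-2 * X) ≤ Real.exp (-2 * 0) := Real.exp_le_exp.2 (by linarith)
    exact mul_le_mul_of_nonneg_left this hc.le
  have hf0 : f 0 = c := by simp [hf]
  have subst := intervalIntegral.integral_comp_smul_deriv' hderiv hf'cont hgcont
  calc ∫ x in (0:ℝ)..X, Complex.exp (-s * x) * (Real.exp (-(c * Real.exp (-2 * x))) : ℂ)
      = ∫ x in (0:ℝ)..X, f' x • g (f x) := by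
        refine intervalIntegral.integral_congr fun x _ => (key x).symm
    _ = ∫ u in (f 0)..(f X), g u := subst
    _ = -∫ u in (f X)..(f 0), g u := (intervalIntegral.integral_symm _ _)
    _ = ∫ u in (f X)..(f 0), (c:ℂ) ^ (-s/2) / 2 * ((u:ℂ) ^ (s/2 - 1) * Complex.exp (-u)) := by
        rw [← intervalIntegral.integral_neg]; simp [hg]
    _ = _ := by
        rw [intervalIntegral.integral_of_le hfX, hf0]

lemma half_re {s : ℂ} (hs : 0 < s.re) : 0 < (s/2).re := by
  rw [show s/2 = s * ((2⁻¹ : ℝ) : ℂ) by push_cast; ring, Complex.mul_re]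
  simp
  positivity

lemma key_eq (s : ℂ) (hs : 0 < s.re) {c : ℝ} (hc : 0 < c) :
    ∫ x in Set.Ioi (0:ℝ), Complex.exp (-s * x) * (Real.exp (-(c * Real.exp (-2 * x))) : ℂ)
      = (c:ℂ) ^ (-s/2) / 2 * lowerGamma (s/2) c := by
  set G : ℝ → ℂ := fun u => (c:ℂ) ^ (-s/2) / 2 * ((u:ℂ) ^ (s/2 - 1) * Complex.exp (-u)) with hG
  have h2 : 0 < (s/2).re := half_re hs
  have hGint : IntegrableOn G (Set.Ioc 0 c) := by
    have h1 := (Complex.GammaIntegral_convergent h2).mono_set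
      (Set.Ioc_subset_Ioi_self : Set.Ioc 0 c ⊆ Set.Ioi 0)
    refine MeasureTheory.IntegrableOn.congr_fun (h1.const_mul ((c:ℂ) ^ (-s/2) / 2)) ?_ measurableSet_Ioc
    intro u _
    simp only [hG]
    rw [Complex.ofReal_exp]
    push_cast
    ring
  have hlim1 : Tendsto
      (fun m : ℕ => ∫ x in (0:ℝ)..(m:ℝ),
        Complex.exp (-s * x) * (Real.exp (-(c * Real.exp (-2 * x))) : ℂ)) atTop
      (𝓝 (∫ x in Set.Ioi (0:ℝ),
        Complex.exp (-s * x) * (Real.exp (-(c * Real.exp (-2 * x))) : ℂ))) :=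
    intervalIntegral_tendsto_integral_Ioi 0 (key_int s hs hc) tendsto_natCast_atTop_atTop
  set S : ℕ → Set ℝ := fun m => Set.Ioc (c * Real.exp (-2 * (m:ℝ))) c with hS
  have hmono : Monotone S := by
    intro m m' hmm
    apply Set.Ioc_subset_Ioc_left
    exact mul_le_mul_of_nonneg_left (Real.exp_le_exp.2 (by push_cast; nlinarith [(Nat.cast_le (α := ℝ)).2 hmm])) hc.le
  have hunion : (⋃ m, S m) = Set.Ioc 0 c := by
    ext u
    simp only [hS, Set.mem_iUnion, Set.mem_Ioc]
    constructor
    · rintro ⟨m, h1, h2'⟩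
      exact ⟨(mul_pos hc (Real.exp_pos _)).trans h1, h2'⟩
    · rintro ⟨h1, h2'⟩
      have t0 : Tendsto (fun m : ℕ => 2 * (m:ℝ)) atTop atTop :=
        (tendsto_natCast_atTop_atTop).const_mul_atTop two_pos
      have t1 : Tendsto (fun m : ℕ => -(2 * (m:ℝ))) atTop atBot := tendsto_neg_atTop_atBot.comp t0
      have t2 : Tendsto (fun m : ℕ => Real.exp (-(2 * (m:ℝ)))) atTop (𝓝 0) :=
        Real.tendsto_exp_atBot.comp t1
      have t3 : Tendsto (fun m : ℕ => c * Real.exp (-(2 * (m:ℝ)))) atTop (𝓝 (c * 0)) :=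
        t2.const_mul c
      rw [mul_zero] at t3
      obtain ⟨m, hm⟩ := (t3.eventually_lt_const h1).exists
      exact ⟨m, by rw [show (-2 : ℝ) * (m:ℝ) = -(2 * (m:ℝ)) by ring]; exact hm, h2'⟩
  have hlim2 : Tendsto (fun m : ℕ => ∫ u in S m, G u) atTop (𝓝 (∫ u in Set.Ioc 0 c, G u)) := by
    have hGint' : IntegrableOn G (⋃ m, S m) := by rw [hunion]; exact hGint
    have := tendsto_setIntegral_of_monotone (fun m => measurableSet_Ioc) hmono hGint'
    rwa [hunion] at this
  have heq : ∀ m : ℕ, (∫ x in (0:ℝ)..(m:ℝ),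
      Complex.exp (-s * x) * (Real.exp (-(c * Real.exp (-2 * x))) : ℂ)) = ∫ u in S m, G u :=
    fun m => step_A s hc (Nat.cast_nonneg m)
  have hmain : (∫ x in Set.Ioi (0:ℝ),
      Complex.exp (-s * x) * (Real.exp (-(c * Real.exp (-2 * x))) : ℂ))
      = ∫ u in Set.Ioc 0 c, G u :=
    tendsto_nhds_unique (hlim1.congr heq) hlim2
  rw [hmain, hG]
  rw [MeasureTheory.integral_const_mul]
  congr 1
  rw [lowerGamma, intervalIntegral.integral_of_le hc.le]

lemma lowerGamma_ofReal (σ : ℝ) {c : ℝ} (hc : 0 < c) :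
    lowerGamma ((σ:ℂ)/2) c = ((∫ t in Set.Ioc (0:ℝ) c, Real.exp (-t) * t ^ (σ/2 - 1) : ℝ) : ℂ) := by
  rw [lowerGamma, intervalIntegral.integral_of_le hc.le]
  calc ∫ t in Set.Ioc (0:ℝ) c, (t:ℂ) ^ ((σ:ℂ)/2 - 1) * Complex.exp (-(t:ℂ))
      = ∫ t in Set.Ioc (0:ℝ) c, ((Real.exp (-t) * t ^ (σ/2 - 1) : ℝ) : ℂ) := by
        refine setIntegral_congr_fun measurableSet_Ioc fun t ht => ?_
        have ht0 : (0:ℝ) < t := ht.1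
        have h1 : ((t : ℝ) : ℂ) ^ ((σ:ℂ)/2 - 1) = ((t ^ (σ/2 - 1) : ℝ) : ℂ) := by
          rw [Complex.ofReal_cpow ht0.le]
          push_cast
          ring_nf
        rw [h1, Complex.ofReal_mul, Complex.ofReal_exp, Complex.ofReal_neg]
        ring
    _ = ((∫ t in Set.Ioc (0:ℝ) c, Real.exp (-t) * t ^ (σ/2 - 1) : ℝ) : ℂ) := integral_ofReal

lemma key_real (σ : ℝ) (hσ : 0 < σ) {c : ℝ} (hc : 0 < c) :
    ∫ x in Set.Ioi (0:ℝ), Real.exp (-σ * x) * Real.exp (-(c * Real.exp (-2 * x)))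
      ≤ c ^ (-σ/2) / 2 * Real.Gamma (σ/2) := by
  have h0 : 0 < σ/2 := by linarith
  set L : ℝ := ∫ t in Set.Ioc (0:ℝ) c, Real.exp (-t) * t ^ (σ/2 - 1) with hL
  have hkey := key_eq (σ:ℂ) (by simpa using hσ) hc
  have hcast : (∫ x in Set.Ioi (0:ℝ),
      Complex.exp (-(σ:ℂ) * x) * (Real.exp (-(c * Real.exp (-2 * x))) : ℂ))
      = ((∫ x in Set.Ioi (0:ℝ),
          Real.exp (-σ * x) * Real.exp (-(c * Real.exp (-2 * x))) : ℝ) : ℂ) := by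
    calc ∫ x in Set.Ioi (0:ℝ),
        Complex.exp (-(σ:ℂ) * x) * (Real.exp (-(c * Real.exp (-2 * x))) : ℂ)
        = ∫ x in Set.Ioi (0:ℝ),
            ((Real.exp (-σ * x) * Real.exp (-(c * Real.exp (-2 * x))) : ℝ) : ℂ) := by
          refine setIntegral_congr_fun measurableSet_Ioi fun x _ => ?_
          rw [Complex.ofReal_mul, Complex.ofReal_exp, Complex.ofReal_neg, Complex.ofReal_mul]
          norm_cast
      _ = _ := integral_ofReal
  have hrhs : (c:ℂ) ^ (-(σ:ℂ)/2) / 2 * lowerGamma ((σ:ℂ)/2) c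
      = ((c ^ (-σ/2) / 2 * L : ℝ) : ℂ) := by
    have hcpow : (c:ℂ) ^ (-(σ:ℂ)/2) = ((c ^ (-σ/2) : ℝ) : ℂ) := by
      rw [Complex.ofReal_cpow hc.le]
      push_cast
      ring_nf
    rw [hcpow, lowerGamma_ofReal σ hc, ← hL]
    push_cast
    ring
  have heq : (∫ x in Set.Ioi (0:ℝ),
      Real.exp (-σ * x) * Real.exp (-(c * Real.exp (-2 * x)))) = c ^ (-σ/2) / 2 * L := by
    have := hcast.symm.trans (hkey.trans hrhs)
    exact_mod_cast this
  rw [heq]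
  have hLle : L ≤ Real.Gamma (σ/2) := by
    rw [Real.Gamma_eq_integral h0, hL]
    refine setIntegral_mono_set (Real.GammaIntegral_convergent h0) ?_ ?_
    · filter_upwards [ae_restrict_mem measurableSet_Ioi] with t ht
      have : (0:ℝ) < t := ht
      positivity
    · exact HasSubset.Subset.eventuallyLE Set.Ioc_subset_Ioi_self
  have : (0:ℝ) ≤ c ^ (-σ/2) / 2 := by positivity
  nlinarith

lemma summable_exp_sq {a u : ℝ} (ha : 0 < a) (hu : 0 < u) :
    Summable (fun n : ℕ+ => Real.exp (-a * (n:ℝ) ^ 2 * u)) := by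
  have hr1 : (0:ℝ) ≤ Real.exp (-(a * u)) := (Real.exp_pos _).le
  have hr2 : Real.exp (-(a * u)) < 1 := Real.exp_lt_one_iff.2 (by nlinarith)
  have hgeo : Summable (fun n : ℕ => Real.exp (-(a * u)) ^ n) :=
    summable_geometric_of_lt_one hr1 hr2
  have hcomp : Summable (fun n : ℕ+ => Real.exp (-(a * u)) ^ (n:ℕ)) :=
    hgeo.comp_injective PNat.coe_injective
  refine Summable.of_nonneg_of_le (fun n => (Real.exp_pos _).le) (fun n => ?_) hcomp
  rw [← Real.exp_nat_mul]
  apply Real.exp_le_exp.2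
  have h1 : (1:ℝ) ≤ (n:ℝ) := by exact_mod_cast n.one_le
  nlinarith [mul_nonneg (mul_pos ha hu).le
    (mul_nonneg (le_trans zero_le_one h1) (sub_nonneg.2 h1))]

lemma cpow_split (s : ℂ) {a : ℝ} (ha : 0 < a) (n : ℕ+) :
    ((a * (n:ℝ) ^ 2 : ℝ) : ℂ) ^ (-s/2) = (a:ℂ) ^ (-s/2) * (n:ℂ) ^ (-s) := by
  have hn0 : (0:ℝ) < (n:ℝ) := by exact_mod_cast n.pos
  have hc : (0:ℝ) < a * (n:ℝ) ^ 2 := by positivity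
  have hnc : ((n:ℕ+):ℂ) = (((n:ℝ)):ℂ) := by push_cast; ring
  rw [ofReal_cpow_pos hc, ofReal_cpow_pos ha, hnc, ofReal_cpow_pos hn0, ← Complex.exp_add]
  congr 1
  rw [Real.log_mul ha.ne' (by positivity), Real.log_pow]
  push_cast
  ring

theorem stmt7 (s : ℂ) (hs : 1 < s.re) (a : ℝ) (ha : 0 < a) :
    ∫ x in Set.Ioi (0 : ℝ),
        Complex.exp (-s * x) * ((∑' n : ℕ+, Real.exp (-a * n ^ 2 * Real.exp (-2 * x)) : ℝ) : ℂ)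
      = (a : ℂ) ^ (-s / 2) / 2 * ∑' n : ℕ+, (n : ℂ) ^ (-s) * lowerGamma (s / 2) (a * n ^ 2) := by
  have hs0 : 0 < s.re := by linarith
  set σ : ℝ := s.re with hσ
  set F : ℕ+ → ℝ → ℂ := fun n x =>
    Complex.exp (-s * x) * (Real.exp (-(a * (n:ℝ) ^ 2 * Real.exp (-2 * x))) : ℂ) with hF
  have hcn : ∀ n : ℕ+, (0:ℝ) < a * (n:ℝ) ^ 2 := fun n => by
    have : (0:ℝ) < (n:ℝ) := by exact_mod_cast n.pos
    positivity
  -- Step 1: pointwise equality of the integrands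
  have hpt : ∀ x : ℝ,
      Complex.exp (-s * x) * ((∑' n : ℕ+, Real.exp (-a * n ^ 2 * Real.exp (-2 * x)) : ℝ) : ℂ)
        = ∑' n : ℕ+, F n x := by
    intro x
    have hu : (0:ℝ) < Real.exp (-2 * x) := Real.exp_pos _
    rw [Complex.ofReal_tsum, ← tsum_mul_left]
    congr 1
    funext n
    simp only [hF]
    congr 2
    push_cast
    ring
  -- Step 2: integrability of each term
  have hint : ∀ n : ℕ+, IntegrableOn (F n) (Set.Ioi 0) := by
    intro n
    have := key_int s hs0 (hcn n)
    simpa [hF] using this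
  -- Step 3: summability of the integral norms
  have hnormeq : ∀ n : ℕ+, (∫ x in Set.Ioi (0:ℝ), ‖F n x‖)
      = ∫ x in Set.Ioi (0:ℝ),
          Real.exp (-σ * x) * Real.exp (-(a * (n:ℝ) ^ 2 * Real.exp (-2 * x))) := by
    intro n
    refine setIntegral_congr_fun measurableSet_Ioi fun x _ => ?_
    simp only [hF]
    rw [norm_mul, Complex.norm_exp, Complex.norm_real, Real.norm_eq_abs,
      abs_of_pos (Real.exp_pos _)]
    congr 1
    simp [hσ]
  have hbound : Summable (fun n : ℕ+ => (a * (n:ℝ) ^ 2) ^ (-σ/2) / 2 * Real.Gamma (σ/2)) := by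
    have h1 : Summable (fun n : ℕ+ => ((n:ℝ)) ^ (-σ)) := by
      have := (Real.summable_nat_rpow (p := -σ)).2 (by linarith)
      have h2 := this.comp_injective PNat.coe_injective
      refine h2.congr fun n => ?_
      simp
    have h2 : Summable (fun n : ℕ+ => a ^ (-σ/2) / 2 * Real.Gamma (σ/2) * ((n:ℝ)) ^ (-σ)) :=
      h1.mul_left _
    refine h2.congr fun n => ?_
    have hn0 : (0:ℝ) < (n:ℝ) := by exact_mod_cast n.pos
    rw [Real.mul_rpow ha.le (by positivity), ← Real.rpow_natCast ((n:ℝ)) 2,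
      ← Real.rpow_mul hn0.le]
    norm_num
    ring
  have hsumnorm : Summable (fun n : ℕ+ => ∫ x in Set.Ioi (0:ℝ), ‖F n x‖) := by
    refine Summable.of_nonneg_of_le
      (fun n => integral_nonneg fun x => norm_nonneg _) (fun n => ?_) hbound
    rw [hnormeq n]
    exact key_real σ (by linarith) (hcn n)
  -- Step 4: swap integral and sum
  have hswap := MeasureTheory.integral_tsum_of_summable_integral_norm
    (μ := volume.restrict (Set.Ioi 0)) (F := F) hint hsumnorm
  have hltr : ∫ x in Set.Ioi (0 : ℝ),
      Complex.exp (-s * x) * ((∑' n : ℕ+, Real.exp (-a * n ^ 2 * Real.exp (-2 * x)) : ℝ) : ℂ)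
      = ∑' n : ℕ+, ∫ x in Set.Ioi (0:ℝ), F n x := by
    calc ∫ x in Set.Ioi (0 : ℝ),
        Complex.exp (-s * x) * ((∑' n : ℕ+, Real.exp (-a * n ^ 2 * Real.exp (-2 * x)) : ℝ) : ℂ)
        = ∫ x in Set.Ioi (0:ℝ), ∑' n : ℕ+, F n x :=
          setIntegral_congr_fun measurableSet_Ioi fun x _ => hpt x
      _ = ∑' n : ℕ+, ∫ x in Set.Ioi (0:ℝ), F n x := hswap.symm
  rw [hltr]
  -- Step 5: evaluate each integral
  have hterm : ∀ n : ℕ+, (∫ x in Set.Ioi (0:ℝ), F n x)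
      = (a:ℂ) ^ (-s/2) / 2 * ((n:ℂ) ^ (-s) * lowerGamma (s/2) (a * (n:ℝ) ^ 2)) := by
    intro n
    have := key_eq s hs0 (hcn n)
    simp only [hF]
    rw [this, cpow_split s ha n]
    ring
  calc ∑' n : ℕ+, ∫ x in Set.Ioi (0:ℝ), F n x
      = ∑' n : ℕ+, (a:ℂ) ^ (-s/2) / 2 * ((n:ℂ) ^ (-s) * lowerGamma (s/2) (a * (n:ℝ) ^ 2)) := by
        congr 1; funext n; exact hterm n
    _ = (a : ℂ) ^ (-s / 2) / 2 * ∑' n : ℕ+, (n : ℂ) ^ (-s) * lowerGamma (s / 2) (a * n ^ 2) := by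
        rw [tsum_mul_left]
end
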